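/- If θ_max < n/(n + 2(1 + ζ)), then F has exactly one fixed point in Δ_n, i.e., the equilibrium social power of the model is unique. -/

import Mathlib

open Matrix Filter Topology ENNReal NNReal

/-- `W(x) = diag(x) + (I - diag(x)) C` -/
noncomputable def Wmat {n : ℕ} (C : Matrix (Fin n) (Fin n) ℝ) (x : Fin n → ℝ) :
    Matrix (Fin n) (Fin n) ℝ :=
  Matrix.diagonal x + (1 - Matrix.diagonal x) * C

/-- `F(x) = (I - Θ)(I - W(x)ᵀΘ)⁻¹ (1/n) 1_n` -/
noncomputable def Fmap {n : ℕ} (C : Matrix (Fin n) (Fin n) ℝ) (θ : Fin n → ℝ)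
    (x : Fin n → ℝ) : Fin n → ℝ :=
  ((1 - Matrix.diagonal θ) * (1 - (Wmat C x)ᵀ * Matrix.diagonal θ)⁻¹).mulVec
    (fun _ => 1 / (n : ℝ))

/-- The simplex `Δ_n`. -/
def simplex (n : ℕ) : Set (Fin n → ℝ) := {x | (∀ i, 0 ≤ x i) ∧ ∑ i, x i = 1}

section neumann
attribute [local instance] Matrix.linftyOpNormedRing

theorem neumann_aux {n : ℕ} (P : Matrix (Fin n) (Fin n) ℝ) (r : ℝ) (hr0 : 0 ≤ r) (hr : r < 1)
    (hP : ∀ i j, 0 ≤ P i j) (hrow : ∀ i, ∑ j, P i j ≤ r) :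
    IsUnit (1 - P).det ∧ ∀ i j, 0 ≤ (1 - P)⁻¹ i j := by
  have hentry : ∀ (M : Matrix (Fin n) (Fin n) ℝ) (i j : Fin n), |M i j| ≤ ‖M‖ := by
    intro M i j
    rw [Matrix.linfty_opNorm_def]
    have h1 : ‖M i j‖₊ ≤ ∑ j', ‖M i j'‖₊ :=
      Finset.single_le_sum (f := fun j' => ‖M i j'‖₊) (fun _ _ => zero_le) (Finset.mem_univ j)
    have h2 : (∑ j', ‖M i j'‖₊) ≤ Finset.univ.sup (fun i : Fin n => ∑ j', ‖M i j'‖₊) :=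
      Finset.le_sup (f := fun i : Fin n => ∑ j', ‖M i j'‖₊) (Finset.mem_univ i)
    have := h1.trans h2
    have : (‖M i j‖₊ : ℝ) ≤ ((Finset.univ.sup fun i : Fin n => ∑ j', ‖M i j'‖₊ : NNReal) : ℝ) :=
      NNReal.coe_le_coe.mpr this
    simpa [Real.norm_eq_abs] using this
  have hnorm : ‖P‖ ≤ r := by
    rw [Matrix.linfty_opNorm_def, ← Real.coe_toNNReal r hr0]
    rw [NNReal.coe_le_coe]
    refine Finset.sup_le fun i _ => ?_
    rw [← NNReal.coe_le_coe]
    push_cast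
    rw [Real.coe_toNNReal r hr0]
    calc ∑ j, (‖P i j‖₊ : ℝ) = ∑ j, P i j := by
          refine Finset.sum_congr rfl fun j _ => ?_
          rw [coe_nnnorm, Real.norm_eq_abs, abs_of_nonneg (hP i j)]
      _ ≤ r := hrow i
  have hlt : ‖P‖ < 1 := hnorm.trans_lt hr
  haveI : HasSummableGeomSeries (Matrix (Fin n) (Fin n) ℝ) :=
    @instHasSummableGeomSeriesOfCompleteSpace _ _ (by
      letI : NormedSpace ℝ (Matrix (Fin n) (Fin n) ℝ) := Matrix.linftyOpNormedSpace
      exact FiniteDimensional.complete ℝ _)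
  have hU : IsUnit (1 - P) := isUnit_one_sub_of_norm_lt_one hlt
  refine ⟨(Matrix.isUnit_iff_isUnit_det _).mp hU, ?_⟩
  intro i j
  have hinv : (1 - P)⁻¹ = ∑' k : ℕ, P ^ k := by
    rw [Matrix.nonsing_inv_eq_ringInverse, ← geom_series_eq_inverse P hlt]
    rfl
  have hhs : HasSum (fun k : ℕ => P ^ k) ((1 - P)⁻¹) := by
    rw [hinv]; exact (summable_geometric_of_norm_lt_one hlt).hasSum
  have hpow : ∀ (k : ℕ) (i j : Fin n), 0 ≤ (P ^ k) i j := by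
    intro k
    induction k with
    | zero => intro i j; rw [pow_zero, Matrix.one_apply]; split <;> norm_num
    | succ k ih =>
        intro i j
        rw [pow_succ, Matrix.mul_apply]
        exact Finset.sum_nonneg fun k' _ => mul_nonneg (ih _ _) (hP _ _)
  have htt := hhs.tendsto_sum_nat
  have hd : Tendsto (fun N => dist (∑ k ∈ Finset.range N, P ^ k) ((1 - P)⁻¹)) atTop (𝓝 0) :=
    tendsto_iff_dist_tendsto_zero.mp htt
  have hent : Tendsto (fun N => (∑ k ∈ Finset.range N, P ^ k) i j) atTop (𝓝 ((1 - P)⁻¹ i j)) := by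
    rw [tendsto_iff_dist_tendsto_zero]
    refine squeeze_zero (fun N => dist_nonneg) (fun N => ?_) hd
    rw [Real.dist_eq, dist_eq_norm]
    calc |(∑ k ∈ Finset.range N, P ^ k) i j - (1 - P)⁻¹ i j|
        = |((∑ k ∈ Finset.range N, P ^ k) - (1 - P)⁻¹) i j| := by rw [Matrix.sub_apply]
      _ ≤ ‖(∑ k ∈ Finset.range N, P ^ k) - (1 - P)⁻¹‖ := hentry _ i j
  refine ge_of_tendsto hent (Filter.Eventually.of_forall fun N => ?_)
  rw [Matrix.sum_apply]
  exact Finset.sum_nonneg fun k _ => hpow k i j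
end neumann

noncomputable def uvec {n : ℕ} (C : Matrix (Fin n) (Fin n) ℝ) (θ : Fin n → ℝ)
    (x : Fin n → ℝ) : Fin n → ℝ :=
  ((1 - (Wmat C x)ᵀ * Matrix.diagonal θ)⁻¹).mulVec (fun _ => 1 / (n : ℝ))

lemma Wmat_apply {n : ℕ} (C : Matrix (Fin n) (Fin n) ℝ) (x : Fin n → ℝ) (i j : Fin n) :
    Wmat C x i j = (if i = j then x i else 0) + (1 - x i) * C i j := by
  unfold Wmat
  rw [Matrix.add_apply, Matrix.diagonal_apply]
  congr 1
  rw [Matrix.mul_apply]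
  rw [Finset.sum_eq_single i]
  · simp [Matrix.sub_apply, Matrix.one_apply]
  · intro k _ hk
    simp [Matrix.sub_apply, Matrix.one_apply, Matrix.diagonal_apply, Ne.symm hk]
  · simp

theorem key_facts {n : ℕ} (hn : 0 < n) (C : Matrix (Fin n) (Fin n) ℝ)
    (hCnonneg : ∀ i j, 0 ≤ C i j) (hCrow : ∀ i, ∑ j, C i j = 1) (hCdiag : ∀ i, C i i = 0)
    (θ : Fin n → ℝ) (hθ0 : ∀ i, 0 ≤ θ i) (θmax : ℝ) (hθmax0 : 0 ≤ θmax) (hθmax1 : θmax < 1)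
    (hθub : ∀ i, θ i ≤ θmax)
    (x : Fin n → ℝ) (hx : x ∈ simplex n) :
    IsUnit (1 - (Wmat C x)ᵀ * Matrix.diagonal θ).det
    ∧ (∀ j, 0 ≤ uvec C θ x j)
    ∧ (∀ j, uvec C θ x j ≤ 1 / n + ∑ i, θ i * uvec C θ x i)
    ∧ ((∑ i, θ i * uvec C θ x i) - θmax * (∑ i, θ i * uvec C θ x i) ≤ (∑ i, θ i) / n)
    ∧ (∀ j i, 0 ≤ ((1 - Matrix.diagonal θ) * (1 - (Wmat C x)ᵀ * Matrix.diagonal θ)⁻¹) j i)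
    ∧ (∀ i, ∑ j, ((1 - Matrix.diagonal θ) * (1 - (Wmat C x)ᵀ * Matrix.diagonal θ)⁻¹) j i = 1)
    ∧ Fmap C θ x = (fun j => (1 - θ j) * uvec C θ x j)
    ∧ Fmap C θ x ∈ simplex n := by
  obtain ⟨hx0, hx1⟩ := hx
  have hnR : (0:ℝ) < n := by exact_mod_cast hn
  have hxle : ∀ i, x i ≤ 1 := by
    intro i
    rw [← hx1]
    exact Finset.single_le_sum (fun j _ => hx0 j) (Finset.mem_univ i)
  set W := Wmat C x with hWdef
  have hW0 : ∀ i j, 0 ≤ W i j := by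
    intro i j
    rw [hWdef, Wmat_apply]
    have := mul_nonneg (sub_nonneg.mpr (hxle i)) (hCnonneg i j)
    split <;> [linarith [hx0 i]; linarith]
  have hWrow : ∀ i, ∑ j, W i j = 1 := by
    intro i
    rw [hWdef]
    simp only [Wmat_apply]
    rw [Finset.sum_add_distrib, Finset.sum_ite_eq, ← Finset.mul_sum, hCrow]
    simp
  have hWle1 : ∀ i j, W i j ≤ 1 := by
    intro i j
    rw [← hWrow i]
    exact Finset.single_le_sum (fun k _ => hW0 i k) (Finset.mem_univ j)
  set P := Matrix.diagonal θ * W with hPdef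
  have hP0 : ∀ i j, 0 ≤ P i j := fun i j => by
    rw [hPdef, Matrix.diagonal_mul]; exact mul_nonneg (hθ0 i) (hW0 i j)
  have hProw : ∀ i, ∑ j, P i j = θ i := by
    intro i
    simp only [hPdef, Matrix.diagonal_mul]
    rw [← Finset.mul_sum, hWrow, mul_one]
  obtain ⟨hdetP, hTnn⟩ := neumann_aux P θmax hθmax0 hθmax1 hP0 (fun i => (hProw i).le.trans (hθub i))
  have hAT : (1 : Matrix (Fin n) (Fin n) ℝ) - Wᵀ * Matrix.diagonal θ = (1 - P)ᵀ := by
    rw [hPdef, Matrix.transpose_sub, Matrix.transpose_mul, Matrix.diagonal_transpose,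
      Matrix.transpose_one]
  have hdet : IsUnit ((1 : Matrix (Fin n) (Fin n) ℝ) - Wᵀ * Matrix.diagonal θ).det := by
    rw [hAT, Matrix.det_transpose]; exact hdetP
  have hMinv : ((1 : Matrix (Fin n) (Fin n) ℝ) - Wᵀ * Matrix.diagonal θ)⁻¹ = ((1 - P)⁻¹)ᵀ := by
    rw [hAT, Matrix.transpose_nonsing_inv]
  have hMinv_nn : ∀ i j, 0 ≤ ((1 : Matrix (Fin n) (Fin n) ℝ) - Wᵀ * Matrix.diagonal θ)⁻¹ i j := by
    intro i j; rw [hMinv, Matrix.transpose_apply]; exact hTnn j i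
  set u := uvec C θ x with hudef
  have hu_apply : ∀ j, u j = ∑ i, ((1 : Matrix (Fin n) (Fin n) ℝ) - Wᵀ * Matrix.diagonal θ)⁻¹ j i * (1 / n) := by
    intro j
    rw [hudef]
    rfl
  have hu0 : ∀ j, 0 ≤ u j := by
    intro j
    rw [hu_apply]
    exact Finset.sum_nonneg fun i _ => mul_nonneg (hMinv_nn j i) (by positivity)
  have hueq : ∀ j, u j = 1 / n + ∑ i, W i j * (θ i * u i) := by
    have h1 : ((1 : Matrix (Fin n) (Fin n) ℝ) - Wᵀ * Matrix.diagonal θ).mulVec u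
        = fun _ => 1 / (n:ℝ) := by
      rw [hudef]
      show _ *ᵥ _ *ᵥ _ = _
      rw [Matrix.mulVec_mulVec, Matrix.mul_nonsing_inv _ hdet, Matrix.one_mulVec]
    intro j
    have h2 := congrFun h1 j
    rw [Matrix.sub_mulVec, Matrix.one_mulVec] at h2
    simp only [Pi.sub_apply] at h2
    have h3 : (Wᵀ * Matrix.diagonal θ).mulVec u j = ∑ i, W i j * (θ i * u i) := by
      show ∑ i, (Wᵀ * Matrix.diagonal θ) j i * u i = _
      refine Finset.sum_congr rfl fun i _ => ?_
      rw [Matrix.mul_diagonal, Matrix.transpose_apply]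
      ring
    rw [h3] at h2
    linarith
  set s := ∑ i, θ i * u i with hsdef
  have hterm_nn : ∀ i, 0 ≤ θ i * u i := fun i => mul_nonneg (hθ0 i) (hu0 i)
  have hu_le : ∀ j, u j ≤ 1 / n + s := by
    intro j
    rw [hueq j]
    have : ∑ i, W i j * (θ i * u i) ≤ s := by
      rw [hsdef]
      exact Finset.sum_le_sum fun i _ => mul_le_of_le_one_left (hterm_nn i) (hWle1 i j)
    linarith
  have hu_ge : ∀ j, 1 / (n:ℝ) ≤ u j := by
    intro j
    rw [hueq j]
    have : (0:ℝ) ≤ ∑ i, W i j * (θ i * u i) :=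
      Finset.sum_nonneg fun i _ => mul_nonneg (hW0 i j) (hterm_nn i)
    linarith
  have hsum_u : ∑ j, u j = 1 + s := by
    calc ∑ j, u j = ∑ j, (1 / (n:ℝ) + ∑ i, W i j * (θ i * u i)) :=
          Finset.sum_congr rfl fun j _ => hueq j
      _ = ∑ j : Fin n, (1 / (n:ℝ)) + ∑ j, ∑ i, W i j * (θ i * u i) := Finset.sum_add_distrib
      _ = 1 + s := by
          congr 1
          · rw [Finset.sum_const, Finset.card_univ, Fintype.card_fin, nsmul_eq_mul]
            field_simp
          · rw [Finset.sum_comm]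
            rw [hsdef]
            refine Finset.sum_congr rfl fun i _ => ?_
            rw [← Finset.sum_mul, hWrow, one_mul]
  have hs_bound : s - θmax * s ≤ (∑ i, θ i) / n := by
    have h : ∑ i, θ i * (u i - 1/(n:ℝ)) ≤ ∑ i, θmax * (u i - 1/(n:ℝ)) :=
      Finset.sum_le_sum
        (fun i _ => mul_le_mul_of_nonneg_right (hθub i) (sub_nonneg.mpr (hu_ge i)))
    have e1 : ∑ i, θ i * (u i - 1/n) = s - (∑ i, θ i) / n := by
      rw [hsdef]
      rw [Finset.sum_div, ← Finset.sum_sub_distrib]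
      refine Finset.sum_congr rfl fun i _ => ?_
      field_simp
    have e2 : ∑ i, θmax * (u i - 1/(n:ℝ)) = θmax * s := by
      rw [← Finset.mul_sum]
      congr 1
      rw [Finset.sum_sub_distrib, hsum_u, Finset.sum_const, Finset.card_univ, Fintype.card_fin,
        nsmul_eq_mul]
      field_simp
      ring
    rw [e1, e2] at h
    linarith
  set B := (1 - Matrix.diagonal θ) * (1 - Wᵀ * Matrix.diagonal θ)⁻¹ with hBdef
  have hone_sub_diag : (1 : Matrix (Fin n) (Fin n) ℝ) - Matrix.diagonal θ
      = Matrix.diagonal (fun i => 1 - θ i) := by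
    rw [← Matrix.diagonal_one, Matrix.diagonal_sub]
  have hBapply : ∀ j i, B j i = (1 - θ j) * ((1 - Wᵀ * Matrix.diagonal θ)⁻¹ j i) := by
    intro j i; rw [hBdef, hone_sub_diag, Matrix.diagonal_mul]
  have hθle1 : ∀ i, θ i ≤ 1 := fun i => (hθub i).trans hθmax1.le
  have hB0 : ∀ j i, 0 ≤ B j i := fun j i => by
    rw [hBapply]; exact mul_nonneg (by linarith [hθle1 j]) (hMinv_nn j i)
  have honev : ((1 : Matrix (Fin n) (Fin n) ℝ) - P).mulVec (fun _ => (1:ℝ)) = fun i => 1 - θ i := by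
    funext i
    show ∑ j, ((1 - P) i j * 1) = _
    simp only [mul_one, Matrix.sub_apply]
    rw [Finset.sum_sub_distrib]
    have h1 : ∑ j, (1 : Matrix (Fin n) (Fin n) ℝ) i j = 1 := by
      simp [Matrix.one_apply]
    rw [h1, hProw]
  have hTcol : ∀ i, ∑ j, (1 - P)⁻¹ i j * (1 - θ j) = 1 := by
    have h2 : (1 - P)⁻¹.mulVec (fun i => 1 - θ i) = fun _ => (1:ℝ) := by
      rw [← honev, Matrix.mulVec_mulVec, Matrix.nonsing_inv_mul _ hdetP, Matrix.one_mulVec]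
    intro i
    have h := congrFun h2 i
    simpa [Matrix.mulVec, dotProduct] using h
  have hBcol : ∀ i, ∑ j, B j i = 1 := by
    intro i
    calc ∑ j, B j i = ∑ j, (1 - P)⁻¹ i j * (1 - θ j) := by
          refine Finset.sum_congr rfl fun j _ => ?_
          rw [hBapply, hMinv, Matrix.transpose_apply]; ring
      _ = 1 := hTcol i
  have hF : Fmap C θ x = fun j => (1 - θ j) * u j := by
    funext j
    show ((1 - Matrix.diagonal θ) * (1 - Wᵀ * Matrix.diagonal θ)⁻¹).mulVec (fun _ => 1/(n:ℝ)) j = _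
    rw [← Matrix.mulVec_mulVec]
    show ((1 - Matrix.diagonal θ).mulVec u) j = _
    rw [hone_sub_diag]
    show ∑ i, Matrix.diagonal (fun i => 1 - θ i) j i * u i = _
    rw [Finset.sum_eq_single j]
    · rw [Matrix.diagonal_apply_eq]
    · intro k _ hk
      rw [Matrix.diagonal_apply_ne _ (Ne.symm hk), zero_mul]
    · simp
  have hFmem : Fmap C θ x ∈ simplex n := by
    rw [hF]
    refine ⟨fun j => mul_nonneg (by linarith [hθle1 j]) (hu0 j), ?_⟩
    have h3 : ∑ j, (1 - θ j) * u j = ∑ j, u j - ∑ j, θ j * u j := by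
      rw [← Finset.sum_sub_distrib]; exact Finset.sum_congr rfl fun j _ => by ring
    rw [h3, hsum_u, ← hsdef]; ring
  exact ⟨hdet, hu0, hu_le, hs_bound, hB0, hBcol, hF, hFmem⟩

theorem contraction_est {n : ℕ} (hn : 0 < n) (C : Matrix (Fin n) (Fin n) ℝ)
    (hCnonneg : ∀ i j, 0 ≤ C i j) (hCrow : ∀ i, ∑ j, C i j = 1) (hCdiag : ∀ i, C i i = 0)
    (θ : Fin n → ℝ) (hθ0 : ∀ i, 0 ≤ θ i) (θmax : ℝ) (hθmax0 : 0 ≤ θmax) (hθmax1 : θmax < 1)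
    (hθub : ∀ i, θ i ≤ θmax)
    (x z : Fin n → ℝ) (hx : x ∈ simplex n) (hz : z ∈ simplex n) :
    ∑ j, |Fmap C θ x j - Fmap C θ z j|
      ≤ ∑ k, 2 * (θ k * uvec C θ z k) * |x k - z k| := by
  obtain ⟨hdetx, -, -, -, hB0x, hBcolx, -, -⟩ :=
    key_facts hn C hCnonneg hCrow hCdiag θ hθ0 θmax hθmax0 hθmax1 hθub x hx
  obtain ⟨hdetz, hu0z, -, -, -, -, -, -⟩ :=
    key_facts hn C hCnonneg hCrow hCdiag θ hθ0 θmax hθmax0 hθmax1 hθub z hz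
  set Mx := (1 : Matrix (Fin n) (Fin n) ℝ) - (Wmat C x)ᵀ * Matrix.diagonal θ with hMx
  set Mz := (1 : Matrix (Fin n) (Fin n) ℝ) - (Wmat C z)ᵀ * Matrix.diagonal θ with hMz
  set u := uvec C θ z with hu
  set Bx := (1 - Matrix.diagonal θ) * Mx⁻¹ with hBx
  set D := ((Wmat C x)ᵀ - (Wmat C z)ᵀ) * Matrix.diagonal θ with hD
  set dvec := D.mulVec u with hdvecdef
  have hterm : ∀ k, 0 ≤ θ k * u k := fun k => mul_nonneg (hθ0 k) (hu0z k)
  have hsub : Mx⁻¹ - Mz⁻¹ = Mx⁻¹ * (Mz - Mx) * Mz⁻¹ :=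
    Matrix.inv_sub_inv (by
      rw [Matrix.isUnit_iff_isUnit_det, Matrix.isUnit_iff_isUnit_det]
      exact iff_of_true hdetx hdetz)
  have hMzMx : Mz - Mx = D := by
    rw [hD, Matrix.sub_mul, hMx, hMz]
    abel
  have hfun : Fmap C θ x - Fmap C θ z = Bx.mulVec dvec := by
    show ((1 - Matrix.diagonal θ) * Mx⁻¹).mulVec (fun _ => 1/(n:ℝ))
        - ((1 - Matrix.diagonal θ) * Mz⁻¹).mulVec (fun _ => 1/(n:ℝ)) = _
    rw [← Matrix.sub_mulVec, ← Matrix.mul_sub, hsub, hMzMx, ← Matrix.mul_assoc,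
      ← Matrix.mul_assoc, ← Matrix.mulVec_mulVec, ← Matrix.mulVec_mulVec]
    rfl
  have hfunj : ∀ j, Fmap C θ x j - Fmap C θ z j = ∑ i, Bx j i * dvec i := by
    intro j
    have := congrFun hfun j
    simpa [Matrix.mulVec, dotProduct] using this
  have hWdiffd : ∀ k i, Wmat C x k i - Wmat C z k i
      = (x k - z k) * ((if k = i then (1:ℝ) else 0) - C k i) := by
    intro k i
    rw [Wmat_apply, Wmat_apply]
    by_cases h : k = i <;> simp [h] <;> ring
  have hdvec : ∀ i, dvec i
      = ∑ k, (x k - z k) * ((if k = i then (1:ℝ) else 0) - C k i) * (θ k * u k) := by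
    intro i
    show ∑ k, D i k * u k = _
    refine Finset.sum_congr rfl fun k _ => ?_
    rw [hD, Matrix.mul_diagonal, Matrix.sub_apply, Matrix.transpose_apply,
      Matrix.transpose_apply, hWdiffd]
    ring
  have habs_row : ∀ k, ∑ i, |(if k = i then (1:ℝ) else 0) - C k i| = 2 := by
    intro k
    have hterm2 : ∀ i, |(if k = i then (1:ℝ) else 0) - C k i|
        = (if k = i then (1:ℝ) - 2 * C k i else 0) + C k i := by
      intro i
      by_cases h : k = i
      · subst h
        simp [hCdiag k]
      · rw [if_neg h, if_neg h, zero_sub, abs_neg, abs_of_nonneg (hCnonneg k i), zero_add]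
    rw [Finset.sum_congr rfl (fun i _ => hterm2 i), Finset.sum_add_distrib,
      Finset.sum_ite_eq, hCrow]
    simp [hCdiag k]
    norm_num
  calc ∑ j, |Fmap C θ x j - Fmap C θ z j| = ∑ j, |∑ i, Bx j i * dvec i| :=
        Finset.sum_congr rfl fun j _ => by rw [hfunj j]
    _ ≤ ∑ j, ∑ i, |Bx j i * dvec i| :=
        Finset.sum_le_sum fun j _ => Finset.abs_sum_le_sum_abs _ _
    _ = ∑ i, (∑ j, Bx j i) * |dvec i| := by
        rw [Finset.sum_comm]
        refine Finset.sum_congr rfl fun i _ => ?_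
        rw [Finset.sum_mul]
        refine Finset.sum_congr rfl fun j _ => ?_
        rw [abs_mul, abs_of_nonneg (hB0x j i)]
    _ = ∑ i, |dvec i| := by
        refine Finset.sum_congr rfl fun i _ => ?_
        rw [hBcolx i, one_mul]
    _ ≤ ∑ i, ∑ k, |x k - z k| * |(if k = i then (1:ℝ) else 0) - C k i| * (θ k * u k) := by
        refine Finset.sum_le_sum fun i _ => ?_
        rw [hdvec i]
        refine (Finset.abs_sum_le_sum_abs _ _).trans (Finset.sum_le_sum fun k _ => ?_)
        rw [abs_mul, abs_mul, abs_of_nonneg (hterm k)]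
    _ = ∑ k, 2 * (θ k * u k) * |x k - z k| := by
        rw [Finset.sum_comm]
        refine Finset.sum_congr rfl fun k _ => ?_
        calc ∑ i, |x k - z k| * |(if k = i then (1:ℝ) else 0) - C k i| * (θ k * u k)
            = (∑ i, |(if k = i then (1:ℝ) else 0) - C k i|) * (|x k - z k| * (θ k * u k)) := by
              rw [Finset.sum_mul]
              refine Finset.sum_congr rfl fun i _ => ?_
              ring
          _ = 2 * (θ k * u k) * |x k - z k| := by rw [habs_row k]; ring

set_option maxHeartbeats 2000000 in
theorem stmt7 (n : ℕ) (hn : 2 ≤ n) (C : Matrix (Fin n) (Fin n) ℝ)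
    (hCnonneg : ∀ i j, 0 ≤ C i j) (hCrow : ∀ i, ∑ j, C i j = 1)
    (hCdiag : ∀ i, C i i = 0)
    (θ : Fin n → ℝ) (hθ0 : ∀ i, 0 ≤ θ i) (hθ1 : ∀ i, θ i < 1) (hθex : ∃ j, 0 < θ j)
    (θmin θmax θave ζ : ℝ)
    (hθmin : IsLeast (Set.range θ) θmin) (hθmax : IsGreatest (Set.range θ) θmax)
    (hθave : θave = (∑ i, θ i) / n) (hζ : ζ = n * θave - θmin)
    (hcond : θmax < n / (n + 2 * (1 + ζ))) :
    ∃! x : Fin n → ℝ, x ∈ simplex n ∧ Fmap C θ x = x := by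
  have hn0 : 0 < n := by omega
  have hnR : (0:ℝ) < n := by exact_mod_cast hn0
  -- basic facts about θmin, θmax, θave, ζ
  have hθub : ∀ i, θ i ≤ θmax := fun i => hθmax.2 ⟨i, rfl⟩
  have hθminle : ∀ i, θmin ≤ θ i := fun i => hθmin.2 ⟨i, rfl⟩
  obtain ⟨jmax, hjmax⟩ := hθmax.1
  obtain ⟨jmin, hjmin⟩ := hθmin.1
  obtain ⟨jp, hjp⟩ := hθex
  have hθmax0 : 0 ≤ θmax := hjmax ▸ hθ0 jmax
  have hθmax1 : θmax < 1 := hjmax ▸ hθ1 jmax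
  have hθmaxpos : 0 < θmax := lt_of_lt_of_le hjp (hθub jp)
  have hθmin0 : 0 ≤ θmin := hjmin ▸ hθ0 jmin
  have hminmax : θmin ≤ θmax := hjmin ▸ hθub jmin
  have hsumθpos : 0 < ∑ i, θ i :=
    lt_of_lt_of_le hjp (Finset.single_le_sum (fun i _ => hθ0 i) (Finset.mem_univ jp))
  have hθavepos : 0 < θave := by rw [hθave]; positivity
  have hnav : (n:ℝ) * θave = ∑ i, θ i := by rw [hθave]; field_simp
  have hζθ : ζ + θmin = ∑ i, θ i := by rw [hζ]; linarith [hnav]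
  have hζ0 : 0 ≤ ζ := by
    have h1 : θmin ≤ ∑ i, θ i :=
      (hθminle jmin).trans (Finset.single_le_sum (fun i _ => hθ0 i) (Finset.mem_univ jmin))
    linarith [hζθ]
  have hcond' : θmax * ((n:ℝ) + 2 + 2*ζ) < n := by
    have hd : (0:ℝ) < n + 2*(1+ζ) := by linarith
    have h := (lt_div_iff₀ hd).mp hcond
    nlinarith [h]
  have h1m : (0:ℝ) < 1 - θmax := by linarith
  set smax : ℝ := θave / (1 - θmax) with hsmaxdef
  have hsmax0 : 0 ≤ smax := div_nonneg hθavepos.le h1m.le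
  have ht : (n:ℝ) * smax * (1 - θmax) = ζ + θmin := by
    rw [hsmaxdef, hζθ, ← hnav]
    field_simp
  set L : ℝ := 2 * θmax * (1/n + smax) with hLdef
  have hL0 : 0 ≤ L := by positivity
  have h2am : 2*θmax*θmin ≤ 2*θmax*θmax := by nlinarith [hθmax0, hminmax]
  have e1 : 2*θmax*(1 + (n:ℝ)*smax)*(1-θmax) = 2*θmax*(1-θmax) + 2*θmax*(ζ+θmin) := by
    linear_combination (2*θmax) * ht
  have e2 : 2*θmax*(1 + (n:ℝ)*smax)*(1-θmax) < n*(1-θmax) := by nlinarith [e1, h2am, hcond']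
  have hkey : 2*θmax*(1 + (n:ℝ)*smax) < n := lt_of_mul_lt_mul_right e2 h1m.le
  have hL1 : L < 1 := by
    have eL : L * n = 2*θmax*(1 + (n:ℝ)*smax) := by
      rw [hLdef]; field_simp
    have : L * n < 1 * n := by rw [eL, one_mul]; exact hkey
    exact lt_of_mul_lt_mul_right this hnR.le
  -- coefficient bound
  have hcoef : ∀ z ∈ simplex n, ∀ k, 2 * (θ k * uvec C θ z k) ≤ L := by
    intro z hz k
    obtain ⟨-, hu0, hu_le, hs_bound, -, -, -, -⟩ :=
      key_facts hn0 C hCnonneg hCrow hCdiag θ hθ0 θmax hθmax0 hθmax1 hθub z hz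
    set s : ℝ := ∑ i, θ i * uvec C θ z i with hsdef
    have hssmax : s ≤ smax := by
      rw [hsmaxdef, le_div_iff₀ h1m]
      have h9 : θave = (∑ i, θ i) / n := hθave
      nlinarith [hs_bound]
    have c1 : θ k * uvec C θ z k ≤ θmax * uvec C θ z k :=
      mul_le_mul_of_nonneg_right (hθub k) (hu0 k)
    have c2 : θmax * uvec C θ z k ≤ θmax * (1/n + s) :=
      mul_le_mul_of_nonneg_left (hu_le k) hθmax0
    have c3 : θmax * (1/(n:ℝ) + s) ≤ θmax * (1/n + smax) :=
      mul_le_mul_of_nonneg_left (by linarith) hθmax0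
    rw [hLdef]
    linarith [c1, c2, c3]
  -- contraction
  have hcontr : ∀ x z, x ∈ simplex n → z ∈ simplex n →
      ∑ j, |Fmap C θ x j - Fmap C θ z j| ≤ L * ∑ k, |x k - z k| := by
    intro x z hx hz
    refine (contraction_est hn0 C hCnonneg hCrow hCdiag θ hθ0 θmax hθmax0 hθmax1 hθub
      x z hx hz).trans ?_
    rw [Finset.mul_sum]
    exact Finset.sum_le_sum fun k _ =>
      mul_le_mul_of_nonneg_right (hcoef z hz k) (abs_nonneg _)
  -- uniqueness part
  have huniq : ∀ x z, (x ∈ simplex n ∧ Fmap C θ x = x) → (z ∈ simplex n ∧ Fmap C θ z = z) →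
      x = z := by
    rintro x z ⟨hx, hxf⟩ ⟨hz, hzf⟩
    have h := hcontr x z hx hz
    rw [hxf, hzf] at h
    have hS0 : (0:ℝ) ≤ ∑ k, |x k - z k| := Finset.sum_nonneg fun k _ => abs_nonneg _
    have hS : ∑ k, |x k - z k| = 0 := by nlinarith [h, hS0, hL1]
    funext i
    have h1 : |x i - z i| ≤ 0 := by
      rw [← hS]
      exact Finset.single_le_sum (f := fun k => |x k - z k|) (fun k _ => abs_nonneg _)
        (Finset.mem_univ i)
    have := abs_nonneg (x i - z i)
    have : |x i - z i| = 0 := le_antisymm h1 this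
    have := abs_eq_zero.mp this
    linarith [sub_eq_zero.mp this]
  -- existence via Banach fixed point theorem in the ℓ¹ metric
  classical
  set e := PiLp.continuousLinearEquiv 1 ℝ (fun _ : Fin n => ℝ) with hedef
  set S : Set (PiLp 1 fun _ : Fin n => ℝ) := ⇑e ⁻¹' (simplex n) with hSdef
  have hclosed_pi : IsClosed (simplex n) := by
    have h1 : IsClosed {x : Fin n → ℝ | ∀ i, 0 ≤ x i} := by
      rw [Set.setOf_forall]
      exact isClosed_iInter fun i => isClosed_le continuous_const (continuous_apply i)
    have h2 : IsClosed {x : Fin n → ℝ | ∑ i, x i = 1} :=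
      isClosed_eq (continuous_finset_sum _ fun i _ => continuous_apply i) continuous_const
    exact h1.inter h2
  have hSclosed : IsClosed S := hclosed_pi.preimage e.continuous
  haveI : CompleteSpace S := hSclosed.completeSpace_coe
  have hcenter : e.symm (fun _ => 1/(n:ℝ)) ∈ S := by
    show e (e.symm _) ∈ simplex n
    rw [e.apply_symm_apply]
    refine ⟨fun i => by positivity, ?_⟩
    rw [Finset.sum_const, Finset.card_univ, Fintype.card_fin, nsmul_eq_mul]
    field_simp
  haveI : Nonempty S := ⟨⟨e.symm (fun _ => 1/(n:ℝ)), hcenter⟩⟩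
  have hFmemS : ∀ p : PiLp 1 fun _ : Fin n => ℝ, p ∈ S → e.symm (Fmap C θ (e p)) ∈ S := by
    intro p hp
    show e (e.symm _) ∈ simplex n
    rw [e.apply_symm_apply]
    exact (key_facts hn0 C hCnonneg hCrow hCdiag θ hθ0 θmax hθmax0 hθmax1 hθub
      (e p) hp).2.2.2.2.2.2.2
  set G : S → S := fun p => ⟨e.symm (Fmap C θ (e p.1)), hFmemS p.1 p.2⟩ with hGdef
  set K : NNReal := Real.toNNReal L with hKdef
  have hKL : (K:ℝ) = L := Real.coe_toNNReal L hL0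
  have hdistS : ∀ a b : PiLp 1 (fun _ : Fin n => ℝ), dist a b = ∑ i, |e a i - e b i| := by
    intro a b
    rw [PiLp.dist_eq_sum (by norm_num : 0 < (1:ℝ≥0∞).toReal)]
    simp only [ENNReal.toReal_one, Real.rpow_one, one_div_one]
    refine Finset.sum_congr rfl fun i _ => Real.dist_eq _ _
  have hlip : LipschitzWith K G := by
    refine LipschitzWith.of_dist_le_mul fun a b => ?_
    rw [Subtype.dist_eq, Subtype.dist_eq, hdistS, hdistS, hKL]
    have hea : e (G a).1 = Fmap C θ (e a.1) := e.apply_symm_apply _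
    have heb : e (G b).1 = Fmap C θ (e b.1) := e.apply_symm_apply _
    calc ∑ i, |e (G a).1 i - e (G b).1 i|
        = ∑ i, |Fmap C θ (e a.1) i - Fmap C θ (e b.1) i| := by rw [hea, heb]
      _ ≤ L * ∑ i, |e a.1 i - e b.1 i| := hcontr _ _ a.2 b.2
  have hcw : ContractingWith K G := by
    refine ⟨?_, hlip⟩
    rw [← NNReal.coe_lt_coe, hKL]
    exact hL1
  set pfix := ContractingWith.fixedPoint G hcw with hpfixdef
  have hfix : G pfix = pfix := ContractingWith.fixedPoint_isFixedPt hcw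
  have hfixval : Fmap C θ (e pfix.1) = e pfix.1 := by
    have h1 : (G pfix).1 = pfix.1 := congrArg Subtype.val hfix
    have h2 : e (G pfix).1 = e pfix.1 := congrArg e h1
    rw [show e (G pfix).1 = Fmap C θ (e pfix.1) from e.apply_symm_apply _] at h2
    exact h2
  refine ⟨e pfix.1, ⟨pfix.2, hfixval⟩, fun y hy => huniq y (e pfix.1) hy ⟨pfix.2, hfixval⟩⟩
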